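/- arXiv:1508.04848 — 7 statements merged into one kernel-verified Lean document; each statement's English description precedes it below -/
import Mathlib

section
/- The product operation on constraint automata is associative up to isomorphism: for any three constraint automata A1, A2, A3, the product (A1 ⋈ A2) ⋈ A3 is isomorphic (via reassociation of state tuples) to A1 ⋈ (A2 ⋈ A3), with transitions identical up to logical equivalence of data constraints. -/
/-- A constraint automaton over state space `Q`, nodes `N`, and data domain `D`.
    Data constraints are represented semantically, as predicates on (partial)
    data assignments `N → Option D` (where `none` means no data flow at a node);
    logical equivalence of data constraints is pointwise `Iff`. -/
structure CA (Q N D : Type) where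
  nodes : Set N
  init : Q
  tr : Q → Set N → ((N → Option D) → Prop) → Q → Prop

/-- Product `A1 ⋈ A2` of constraint automata: rule (1) synchronizes transitions
    agreeing on shared nodes (label `N1 ∪ N2`, guard `g1 ∧ g2`); rule (2) lets one
    automaton fire alone (with `Nj = ∅`, `gj = ⊤`) when its label is disjoint from
    the other's node set, the other staying put. -/
def caProd {Q1 Q2 N D : Type} (A1 : CA Q1 N D) (A2 : CA Q2 N D) :
    CA (Q1 × Q2) N D where
  nodes := A1.nodes ∪ A2.nodes
  init := (A1.init, A2.init)
  tr := fun q M g q' =>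
    (∃ M1 M2 g1 g2, A1.tr q.1 M1 g1 q'.1 ∧ A2.tr q.2 M2 g2 q'.2 ∧
      M1 ∩ A2.nodes = M2 ∩ A1.nodes ∧ M = M1 ∪ M2 ∧
      g = fun δ => g1 δ ∧ g2 δ) ∨
    (∃ g1, A1.tr q.1 M g1 q'.1 ∧ q'.2 = q.2 ∧ M ∩ A2.nodes = ∅ ∧
      g = fun δ => g1 δ ∧ True) ∨
    (∃ g2, A2.tr q.2 M g2 q'.2 ∧ q'.1 = q.1 ∧ M ∩ A1.nodes = ∅ ∧
      g = fun δ => True ∧ g2 δ)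

/-- Existential quantification of a data constraint over the nodes in `P`
    (the semantics of `∃ d_{p1} ⋯ ∃ d_{pn} (g)`). -/
def hideG {N D : Type} (P : Set N) (g : (N → Option D) → Prop) :
    (N → Option D) → Prop :=
  fun δ => ∃ δ', (∀ n, n ∉ P → δ' n = δ n) ∧ g δ'

/-- Hiding the nodes `P` in a constraint automaton. -/
def caHide {Q N D : Type} (P : Set N) (A : CA Q N D) : CA Q N D where
  nodes := A.nodes \ P
  init := A.init
  tr := fun q M' g' q' => ∃ M g, A.tr q M g q' ∧ M' = M \ P ∧ g' = hideG P g

set_option maxHeartbeats 2000000 in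
/-- the product of constraint automata is associative up to the
    isomorphism reassociating state tuples, with transitions identical up to
    logical equivalence of data constraints. -/
theorem caProd_assoc {Q1 Q2 Q3 N D : Type}
    (A1 : CA Q1 N D) (A2 : CA Q2 N D) (A3 : CA Q3 N D) :
    (caProd (caProd A1 A2) A3).nodes = (caProd A1 (caProd A2 A3)).nodes ∧
    (caProd A1 (caProd A2 A3)).init =
      ((caProd (caProd A1 A2) A3).init.1.1,
        ((caProd (caProd A1 A2) A3).init.1.2, (caProd (caProd A1 A2) A3).init.2)) ∧
    (∀ (q1 q1' : Q1) (q2 q2' : Q2) (q3 q3' : Q3) (M : Set N)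
        (g : (N → Option D) → Prop),
      (caProd (caProd A1 A2) A3).tr ((q1, q2), q3) M g ((q1', q2'), q3') ↔
        ∃ g', (∀ δ, g δ ↔ g' δ) ∧
          (caProd A1 (caProd A2 A3)).tr (q1, (q2, q3)) M g' (q1', (q2', q3'))) := by
  refine ⟨by simp [caProd, Set.union_assoc], rfl, ?_⟩
  intro q1 q1' q2 q2' q3 q3' M g
  constructor
  · rintro (⟨M12, M3, g12, g3, h12, h3, hs, hM, hg⟩ | ⟨g12, h12, hq3, hs, hg⟩ |
      ⟨g3, h3, hq12, hs, hg⟩)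
    · -- outer sync
      rcases h12 with ⟨M1, M2, g1, g2, h1, h2, hs12, hM12, hg12⟩ |
        ⟨g1, h1, hq2, hs12, hg12⟩ | ⟨g2, h2, hq1, hs12, hg12⟩
      · -- sync-sync
        subst hM12; subst hg12; subst hM; subst hg
        refine ⟨fun δ => g1 δ ∧ (g2 δ ∧ g3 δ), fun δ => by tauto,
          Or.inl ⟨M1, M2 ∪ M3, g1, fun δ => g2 δ ∧ g3 δ, h1,
            Or.inl ⟨M2, M3, g2, g3, h2, h3, ?_, rfl, rfl⟩, ?_, by rw [Set.union_assoc], rfl⟩⟩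
        all_goals
          have hs' := Set.ext_iff.mp hs
          have hs12' := Set.ext_iff.mp hs12
          ext x
          have h1 := hs' x; have h2 := hs12' x
          simp only [caProd, Set.mem_inter_iff, Set.mem_union] at *
          tauto
      · -- (A1 alone) sync A3
        subst hg12; subst hg; subst hq2
        have hA : M3 ∩ A2.nodes = ∅ := by
          have hs' := Set.ext_iff.mp hs; have h12' := Set.ext_iff.mp hs12
          ext x; have a := hs' x; have b := h12' x
          simp only [caProd, Set.mem_inter_iff, Set.mem_union, Set.mem_empty_iff_false,
            iff_false] at *
          tauto
        refine ⟨fun δ => g1 δ ∧ (True ∧ g3 δ), fun δ => by tauto,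
          Or.inl ⟨M12, M3, g1, fun δ => True ∧ g3 δ, h1,
            Or.inr (Or.inr ⟨g3, h3, rfl, hA, rfl⟩), ?_, hM, rfl⟩⟩
        have hs' := Set.ext_iff.mp hs; have h12' := Set.ext_iff.mp hs12
        ext x; have a := hs' x; have b := h12' x
        simp only [caProd, Set.mem_inter_iff, Set.mem_union, Set.mem_empty_iff_false,
          iff_false] at *
        tauto
      · -- (A2 alone) sync A3
        subst hg12; subst hg; subst hq1
        have hB : M12 ∩ A3.nodes = M3 ∩ A2.nodes := by
          have hs' := Set.ext_iff.mp hs; have h12' := Set.ext_iff.mp hs12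
          ext x; have a := hs' x; have b := h12' x
          simp only [caProd, Set.mem_inter_iff, Set.mem_union, Set.mem_empty_iff_false,
            iff_false] at *
          tauto
        refine ⟨fun δ => True ∧ (g2 δ ∧ g3 δ), fun δ => by tauto,
          Or.inr (Or.inr ⟨fun δ => g2 δ ∧ g3 δ,
            Or.inl ⟨M12, M3, g2, g3, h2, h3, hB, hM, rfl⟩, rfl, ?_, rfl⟩)⟩
        subst hM
        have hs' := Set.ext_iff.mp hs; have h12' := Set.ext_iff.mp hs12
        ext x; have a := hs' x; have b := h12' x
        simp only [caProd, Set.mem_inter_iff, Set.mem_union, Set.mem_empty_iff_false,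
          iff_false] at *
        tauto
    · -- outer: (A1 join A2) alone, q3' = q3
      subst hq3; subst hg
      rcases h12 with ⟨M1, M2, g1, g2, h1, h2, hs12, hM12, hg12⟩ |
        ⟨g1, h1, hq2, hs12, hg12⟩ | ⟨g2, h2, hq1, hs12, hg12⟩
      · -- sync alone
        subst hM12; subst hg12
        have hA : M2 ∩ A3.nodes = ∅ := by
          have hs' := Set.ext_iff.mp hs
          ext x; have a := hs' x
          simp only [caProd, Set.mem_inter_iff, Set.mem_union, Set.mem_empty_iff_false,
            iff_false] at *
          tauto
        refine ⟨fun δ => g1 δ ∧ (g2 δ ∧ True), fun δ => by tauto,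
          Or.inl ⟨M1, M2, g1, fun δ => g2 δ ∧ True, h1,
            Or.inr (Or.inl ⟨g2, h2, rfl, hA, rfl⟩), ?_, rfl, rfl⟩⟩
        have hs' := Set.ext_iff.mp hs; have h12' := Set.ext_iff.mp hs12
        ext x; have a := hs' x; have b := h12' x
        simp only [caProd, Set.mem_inter_iff, Set.mem_union, Set.mem_empty_iff_false,
          iff_false] at *
        tauto
      · -- A1 alone alone
        subst hq2; subst hg12
        have hA : M ∩ (A2.nodes ∪ A3.nodes) = ∅ := by
          have hs' := Set.ext_iff.mp hs; have h12' := Set.ext_iff.mp hs12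
          ext x; have a := hs' x; have b := h12' x
          simp only [caProd, Set.mem_inter_iff, Set.mem_union, Set.mem_empty_iff_false,
            iff_false] at *
          tauto
        exact ⟨fun δ => g1 δ ∧ True, fun δ => by tauto,
          Or.inr (Or.inl ⟨g1, h1, rfl, hA, rfl⟩)⟩
      · -- A2 alone alone
        subst hq1; subst hg12
        exact ⟨fun δ => True ∧ (g2 δ ∧ True), fun δ => by tauto,
          Or.inr (Or.inr ⟨fun δ => g2 δ ∧ True,
            Or.inr (Or.inl ⟨g2, h2, rfl, hs, rfl⟩), rfl, hs12, rfl⟩)⟩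
    · -- outer: A3 alone
      simp only [Prod.mk.injEq] at hq12
      obtain ⟨rfl, rfl⟩ := hq12
      subst hg
      have hA1 : M ∩ A1.nodes = ∅ := by
        have hs' := Set.ext_iff.mp hs
        ext x; have a := hs' x
        simp only [caProd, Set.mem_inter_iff, Set.mem_union, Set.mem_empty_iff_false,
          iff_false] at *
        tauto
      have hA2 : M ∩ A2.nodes = ∅ := by
        have hs' := Set.ext_iff.mp hs
        ext x; have a := hs' x
        simp only [caProd, Set.mem_inter_iff, Set.mem_union, Set.mem_empty_iff_false,
          iff_false] at *
        tauto
      exact ⟨fun δ => True ∧ (True ∧ g3 δ), fun δ => by tauto,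
        Or.inr (Or.inr ⟨fun δ => True ∧ g3 δ,
          Or.inr (Or.inr ⟨g3, h3, rfl, hA2, rfl⟩), rfl, hA1, rfl⟩)⟩
  · rintro ⟨g', hg, (⟨M1, M23, g1, g23, h1, h23, hs, hM, hg'⟩ |
      ⟨g1, h1, hq23, hs, hg'⟩ | ⟨g23, h23, hq1, hs, hg'⟩)⟩
    · -- outer sync
      subst hg'
      rcases h23 with ⟨M2, M3, g2, g3, h2, h3, hs23, hM23, hg23⟩ |
        ⟨g2, h2, hq3, hs23, hg23⟩ | ⟨g3, h3, hq2, hs23, hg23⟩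
      · -- sync-sync
        subst hM23; subst hg23; subst hM
        refine Or.inl ⟨M1 ∪ M2, M3, fun δ => g1 δ ∧ g2 δ, g3,
          Or.inl ⟨M1, M2, g1, g2, h1, h2, ?_, rfl, rfl⟩, h3, ?_,
          by rw [Set.union_assoc], funext fun δ => propext (by have := hg δ; tauto)⟩
        all_goals
          clear hg
          have hs' := Set.ext_iff.mp hs
          have hs23' := Set.ext_iff.mp hs23
          ext x
          have a := hs' x; have b := hs23' x
          simp only [caProd, Set.mem_inter_iff, Set.mem_union] at *
          tauto
      · -- A1 sync (A2 alone)
        subst hg23; subst hq3; subst hM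
        have hA : M1 ∩ A2.nodes = M23 ∩ A1.nodes := by
          clear hg
          have hs' := Set.ext_iff.mp hs; have b' := Set.ext_iff.mp hs23
          ext x; have a := hs' x; have b := b' x
          simp only [caProd, Set.mem_inter_iff, Set.mem_union, Set.mem_empty_iff_false,
            iff_false] at *
          tauto
        refine Or.inr (Or.inl ⟨fun δ => g1 δ ∧ g2 δ,
          Or.inl ⟨M1, M23, g1, g2, h1, h2, hA, rfl, rfl⟩, rfl, ?_,
          funext fun δ => propext (by have := hg δ; tauto)⟩)
        clear hg
        have hs' := Set.ext_iff.mp hs; have b' := Set.ext_iff.mp hs23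
        ext x; have a := hs' x; have b := b' x
        simp only [caProd, Set.mem_inter_iff, Set.mem_union, Set.mem_empty_iff_false,
          iff_false] at *
        tauto
      · -- A1 sync (A3 alone)
        subst hg23; subst hq2; subst hM
        have hA : M1 ∩ A2.nodes = ∅ := by
          clear hg
          have hs' := Set.ext_iff.mp hs; have b' := Set.ext_iff.mp hs23
          ext x; have a := hs' x; have b := b' x
          simp only [caProd, Set.mem_inter_iff, Set.mem_union, Set.mem_empty_iff_false,
            iff_false] at *
          tauto
        refine Or.inl ⟨M1, M23, fun δ => g1 δ ∧ True, g3,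
          Or.inr (Or.inl ⟨g1, h1, rfl, hA, rfl⟩), h3, ?_, rfl,
          funext fun δ => propext (by have := hg δ; tauto)⟩
        clear hg
        have hs' := Set.ext_iff.mp hs; have b' := Set.ext_iff.mp hs23
        ext x; have a := hs' x; have b := b' x
        simp only [caProd, Set.mem_inter_iff, Set.mem_union, Set.mem_empty_iff_false,
          iff_false] at *
        tauto
    · -- A1 alone
      subst hg'
      simp only [Prod.mk.injEq] at hq23
      obtain ⟨rfl, rfl⟩ := hq23
      have hA : M ∩ A2.nodes = ∅ := by
        clear hg
        have hs' := Set.ext_iff.mp hs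
        ext x; have a := hs' x
        simp only [caProd, Set.mem_inter_iff, Set.mem_union, Set.mem_empty_iff_false,
          iff_false] at *
        tauto
      have hB : M ∩ A3.nodes = ∅ := by
        clear hg
        have hs' := Set.ext_iff.mp hs
        ext x; have a := hs' x
        simp only [caProd, Set.mem_inter_iff, Set.mem_union, Set.mem_empty_iff_false,
          iff_false] at *
        tauto
      exact Or.inr (Or.inl ⟨fun δ => g1 δ ∧ True,
        Or.inr (Or.inl ⟨g1, h1, rfl, hA, rfl⟩), rfl, hB,
        funext fun δ => propext (by have := hg δ; tauto)⟩)
    · -- (A2 join A3) alone, q1' = q1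
      subst hg'; subst hq1
      rcases h23 with ⟨M2, M3, g2, g3, h2, h3, hs23, hM23, hg23⟩ |
        ⟨g2, h2, hq3, hs23, hg23⟩ | ⟨g3, h3, hq2, hs23, hg23⟩
      · -- sync alone
        subst hM23; subst hg23
        have hA : M2 ∩ A1.nodes = ∅ := by
          clear hg
          have hs' := Set.ext_iff.mp hs
          ext x; have a := hs' x
          simp only [caProd, Set.mem_inter_iff, Set.mem_union, Set.mem_empty_iff_false,
            iff_false] at *
          tauto
        refine Or.inl ⟨M2, M3, fun δ => True ∧ g2 δ, g3,
          Or.inr (Or.inr ⟨g2, h2, rfl, hA, rfl⟩), h3, ?_, rfl,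
          funext fun δ => propext (by have := hg δ; tauto)⟩
        clear hg
        have hs' := Set.ext_iff.mp hs; have b' := Set.ext_iff.mp hs23
        ext x; have a := hs' x; have b := b' x
        simp only [caProd, Set.mem_inter_iff, Set.mem_union, Set.mem_empty_iff_false,
          iff_false] at *
        tauto
      · -- A2 alone alone
        subst hg23; subst hq3
        exact Or.inr (Or.inl ⟨fun δ => True ∧ g2 δ,
          Or.inr (Or.inr ⟨g2, h2, rfl, hs, rfl⟩), rfl, hs23,
          funext fun δ => propext (by have := hg δ; tauto)⟩)
      · -- A3 alone alone
        subst hg23; subst hq2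
        have hA : M ∩ (A1.nodes ∪ A2.nodes) = ∅ := by
          clear hg
          have hs' := Set.ext_iff.mp hs; have b' := Set.ext_iff.mp hs23
          ext x; have a := hs' x; have b := b' x
          simp only [caProd, Set.mem_inter_iff, Set.mem_union, Set.mem_empty_iff_false,
            iff_false] at *
          tauto
        exact Or.inr (Or.inr ⟨g3, h3, rfl, hA,
          funext fun δ => propext (by have := hg δ; tauto)⟩)
end

section
/- Bisimilarity is a congruence with respect to the product of port automata: if A1 is bisimilar to A1' and A2 is bisimilar to A2' (where Ai and Ai' have the same node sets for i = 1, 2), then A1 ⋈ A2 is bisimilar to A1' ⋈ A2'. -/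
/-- A labeled transition system with one initial state. -/
structure LTS (Λ : Type) : Type 1 where
  Q : Type
  init : Q
  tr : Q → Λ → Q → Prop

/-- `R` is a bisimulation between `L1` and `L2` relating the initial states. -/
def IsBisim {Λ : Type} (L1 L2 : LTS Λ) (R : L1.Q → L2.Q → Prop) : Prop :=
  R L1.init L2.init ∧
  ∀ q1 q2, R q1 q2 →
    (∀ a q1', L1.tr q1 a q1' → ∃ q2', L2.tr q2 a q2' ∧ R q1' q2') ∧
    (∀ a q2', L2.tr q2 a q2' → ∃ q1', L1.tr q1 a q1' ∧ R q1' q2')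

/-- Bisimilarity of labeled transition systems. -/
def Bisim {Λ : Type} (L1 L2 : LTS Λ) : Prop := ∃ R, IsBisim L1 L2 R

/-- A port automaton over the node universe `N`
    (also used for (data-agnostic) BIP components). -/
structure PA (N : Type) : Type 1 where
  Q : Type
  init : Q
  nodes : Set N
  tr : Q → Set N → Q → Prop

/-- Interpretation of a port automaton as an LTS over the alphabet `2^N`. -/
def fa {N : Type} (A : PA N) : LTS (Set N) := ⟨A.Q, A.init, A.tr⟩

/-- Hiding a set `P` of nodes in a port automaton. -/
def PA.hide {N : Type} (P : Set N) (A : PA N) : PA N :=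
  ⟨A.Q, A.init, A.nodes \ P, fun q M q' => ∃ M0, A.tr q M0 q' ∧ M = M0 \ P⟩

/-- Product of port automata: synchronization on shared nodes,
    interleaving for transitions disjoint from the other automaton's nodes. -/
def paProd {N : Type} (A1 A2 : PA N) : PA N where
  Q := A1.Q × A2.Q
  init := (A1.init, A2.init)
  nodes := A1.nodes ∪ A2.nodes
  tr := fun q M q' =>
    (∃ M1 M2, A1.tr q.1 M1 q'.1 ∧ A2.tr q.2 M2 q'.2 ∧
      M1 ∩ A2.nodes = M2 ∩ A1.nodes ∧ M = M1 ∪ M2) ∨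
    (A1.tr q.1 M q'.1 ∧ q'.2 = q.2 ∧ M ∩ A2.nodes = ∅) ∨
    (A2.tr q.2 M q'.2 ∧ q'.1 = q.1 ∧ M ∩ A1.nodes = ∅)

/-- The class PA': ∅-labeled transitions exist exactly as self-loops. -/
def PAPrime {N : Type} (A : PA N) : Prop := ∀ q q', A.tr q ∅ q' ↔ q' = q

/-- Standard bisimilarity of port automata. -/
def PABisim {N : Type} (A1 A2 : PA N) : Prop :=
  ∃ R : A1.Q → A2.Q → Prop, R A1.init A2.init ∧
    ∀ q1 q2, R q1 q2 →
      (∀ M q1', A1.tr q1 M q1' → ∃ q2', A2.tr q2 M q2' ∧ R q1' q2') ∧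
      (∀ M q2', A2.tr q2 M q2' → ∃ q1', A1.tr q1 M q1' ∧ R q1' q2')

/-- A BIP architecture: a finite disconnected family of coordinating components,
    an interface `ports` containing all their ports, and an interaction model `γ`. -/
structure Arch (N : Type) : Type 1 where
  ι : Type
  fin : Finite ι
  comp : ι → PA N
  ports : Set N
  γ : Set (Set N)
  sub : ∀ i, (comp i).nodes ⊆ ports
  disj : ∀ i j, i ≠ j → Disjoint (comp i).nodes (comp j).nodes

/-- The internal ports `P_C` of an architecture. -/
def Arch.PC {N : Type} (A : Arch N) : Set N := ⋃ i, (A.comp i).nodes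

/-- Transitions of the application of the architecture `A` to the dummy component
    `D = ({q_D}, q_D, P \ P_C, {(q_D, M, q_D) | ∅ ≠ M ⊆ P \ P_C})`
    (the dummy imposes no constraints and never changes state).
    Rule 1: `M = ∅` and exactly one coordinating component makes an `∅`-move;
    Rule 2: `M ∩ P_A = M ∈ γ` and every component sharing ports with `M`
    makes the projected move while the others stay put. -/
def appTr {N : Type} (A : Arch N) (q : ∀ i, (A.comp i).Q) (M : Set N)
    (q' : ∀ i, (A.comp i).Q) : Prop :=
  (M = ∅ ∧ ∃ i, (A.comp i).tr (q i) ∅ (q' i) ∧ ∀ j, j ≠ i → q' j = q j) ∨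
  (M ⊆ A.ports ∧ M ∈ A.γ ∧ ∀ i,
    (M ∩ (A.comp i).nodes ≠ ∅ → (A.comp i).tr (q i) (M ∩ (A.comp i).nodes) (q' i)) ∧
    (M ∩ (A.comp i).nodes = ∅ → q' i = q i))

/-- Interpretation `g_a` of a BIP architecture: the application to the dummy
    component (whose unique state is kept as a `Unit` coordinate),
    with all internal ports `P_C` hidden from the labels. -/
def ga {N : Type} (A : Arch N) : LTS (Set N) where
  Q := (∀ i, (A.comp i).Q) × Unit
  init := (fun i => (A.comp i).init, ())
  tr := fun q M' q' => ∃ M, appTr A q.1 M q'.1 ∧ M' = M \ A.PC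

/-- The class Arch': coordinating components have ∅-labeled transitions
    only as self-loops. -/
def ArchPrime {N : Type} (A : Arch N) : Prop :=
  ∀ i q q', (A.comp i).tr q ∅ q' → q' = q

/-- Translation of a port automaton into a BIP architecture, with `pr` providing
    the fresh primed duplicate of each port.  The single coordinating component is
    the automaton itself relabeled over the primed ports, and the interaction model
    is `{M ∪ M' | M ⊆ N}`. -/
def BIPa {N : Type} (A : PA N) (pr : N → N) : Arch N where
  ι := Unit
  fin := inferInstance
  comp := fun _ =>
    ⟨A.Q, A.init, pr '' A.nodes, fun q M' q' => ∃ M, M' = pr '' M ∧ A.tr q M q'⟩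
  ports := A.nodes ∪ pr '' A.nodes
  γ := {M' | ∃ M, M ⊆ A.nodes ∧ M' = M ∪ pr '' M}
  sub := fun _ => Set.subset_union_right
  disj := fun i j h => absurd (Subsingleton.elim i j) h

/-- The single-state port automaton encoding of an interaction model `γ` over ports `P`. -/
def Agamma {N : Type} (P : Set N) (γ : Set (Set N)) : PA N :=
  ⟨Unit, (), P, fun _ M _ => M ∈ γ⟩

/-- n-ary product of a family of port automata (the generalization of `paProd`):
    a global step labeled `M` projects to a step or an idling of each member. -/
def famProd {N ι : Type} (f : ι → PA N) : PA N where
  Q := ∀ i, (f i).Q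
  init := fun i => (f i).init
  nodes := ⋃ i, (f i).nodes
  tr := fun q M q' => M ⊆ (⋃ i, (f i).nodes) ∧ ∀ i,
    ((f i).tr (q i) (M ∩ (f i).nodes) (q' i) ∨ (M ∩ (f i).nodes = ∅ ∧ q' i = q i))

/-- Translation of a BIP architecture into a port automaton:
    `Reo_a(A) = ∃P_C (C̃1 ⋈ ⋯ ⋈ C̃n ⋈ A_γ)`. -/
def ReoA {N : Type} (A : Arch N) : PA N :=
  PA.hide A.PC (famProd (fun o : Option A.ι =>
    match o with
    | none => Agamma A.ports A.γ
    | some i => A.comp i))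

/-- Composition `A1 ⊕ A2` of BIP architectures. -/
def archComp {N : Type} (A1 A2 : Arch N)
    (h1 : Disjoint A1.PC A2.ports) (h2 : Disjoint A2.PC A1.ports) : Arch N where
  ι := A1.ι ⊕ A2.ι
  fin := by have := A1.fin; have := A2.fin; infer_instance
  comp := Sum.elim A1.comp A2.comp
  ports := A1.ports ∪ A2.ports
  γ := {M | M ⊆ A1.ports ∪ A2.ports ∧ M ∩ A1.ports ∈ A1.γ ∧ M ∩ A2.ports ∈ A2.γ}
  sub := by
    rintro (i | i)
    · exact (A1.sub i).trans Set.subset_union_left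
    · exact (A2.sub i).trans Set.subset_union_right
  disj := by
    rintro (i | i) (j | j) hij
    · exact A1.disj i j (by rintro rfl; exact hij rfl)
    · exact h1.mono (Set.subset_iUnion (fun k => (A1.comp k).nodes) i) (A2.sub j)
    · exact h2.mono (Set.subset_iUnion (fun k => (A2.comp k).nodes) i) (A1.sub j)
    · exact A2.disj i j (by rintro rfl; exact hij rfl)

/-- Bisimilarity is a congruence with respect to the product of
    port automata. -/
theorem bisim_congruence_paProd {N : Type} (A1 A1' A2 A2' : PA N)
    (h1n : A1.nodes = A1'.nodes) (h2n : A2.nodes = A2'.nodes)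
    (h1 : Bisim (fa A1) (fa A1')) (h2 : Bisim (fa A2) (fa A2')) :
    Bisim (fa (paProd A1 A2)) (fa (paProd A1' A2')) := by
  obtain ⟨R1, hR1i, hR1⟩ := h1
  obtain ⟨R2, hR2i, hR2⟩ := h2
  refine ⟨fun p p' => R1 p.1 p'.1 ∧ R2 p.2 p'.2, ⟨hR1i, hR2i⟩, ?_⟩
  rintro ⟨q1, q2⟩ ⟨p1, p2⟩ ⟨hr1, hr2⟩
  obtain ⟨f1, b1⟩ := hR1 q1 p1 hr1
  obtain ⟨f2, b2⟩ := hR2 q2 p2 hr2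
  constructor
  · rintro M ⟨q1', q2'⟩ (⟨M1, M2, t1, t2, hsync, rfl⟩ | ⟨t1, rfl, hd⟩ | ⟨t2, rfl, hd⟩)
    · obtain ⟨p1', tp1, hr1'⟩ := f1 M1 q1' t1
      obtain ⟨p2', tp2, hr2'⟩ := f2 M2 q2' t2
      exact ⟨(p1', p2'), Or.inl ⟨M1, M2, tp1, tp2, by rw [← h1n, ← h2n]; exact hsync, rfl⟩,
        hr1', hr2'⟩
    · obtain ⟨p1', tp1, hr1'⟩ := f1 M q1' t1
      exact ⟨(p1', p2), Or.inr (Or.inl ⟨tp1, rfl, by rw [← h2n]; exact hd⟩), hr1', hr2⟩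
    · obtain ⟨p2', tp2, hr2'⟩ := f2 M q2' t2
      exact ⟨(p1, p2'), Or.inr (Or.inr ⟨tp2, rfl, by rw [← h1n]; exact hd⟩), hr1, hr2'⟩
  · rintro M ⟨p1', p2'⟩ (⟨M1, M2, t1, t2, hsync, rfl⟩ | ⟨t1, rfl, hd⟩ | ⟨t2, rfl, hd⟩)
    · obtain ⟨q1', tq1, hr1'⟩ := b1 M1 p1' t1
      obtain ⟨q2', tq2, hr2'⟩ := b2 M2 p2' t2
      exact ⟨(q1', q2'), Or.inl ⟨M1, M2, tq1, tq2, by rw [h1n, h2n]; exact hsync, rfl⟩,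
        hr1', hr2'⟩
    · obtain ⟨q1', tq1, hr1'⟩ := b1 M p1' t1
      exact ⟨(q1', q2), Or.inr (Or.inl ⟨tq1, rfl, by rw [h2n]; exact hd⟩), hr1', hr2⟩
    · obtain ⟨q2', tq2, hr2'⟩ := b2 M p2' t2
      exact ⟨(q1, q2'), Or.inr (Or.inr ⟨tq2, rfl, by rw [h1n]; exact hd⟩), hr1, hr2'⟩
end

section
/- Bisimilarity is preserved by hiding: if port automata A1 and A2 (with the same node set N) are bisimilar and P ⊆ N, then the hidden automata ∃P(A1) and ∃P(A2) are bisimilar. -/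
/-- Bisimilarity is preserved by hiding. -/
theorem bisim_preserved_by_hiding {N : Type} (A1 A2 : PA N) (P : Set N)
    (hn : A1.nodes = A2.nodes) (hP : P ⊆ A1.nodes)
    (h : Bisim (fa A1) (fa A2)) :
    Bisim (fa (PA.hide P A1)) (fa (PA.hide P A2)) := by
  obtain ⟨R, hinit, hR⟩ := h
  refine ⟨R, hinit, fun q1 q2 hq => ⟨?_, ?_⟩⟩
  · rintro a q1' ⟨M0, htr, rfl⟩
    obtain ⟨q2', htr2, hR'⟩ := (hR q1 q2 hq).1 M0 q1' htr
    exact ⟨q2', ⟨M0, htr2, rfl⟩, hR'⟩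
  · rintro a q2' ⟨M0, htr, rfl⟩
    obtain ⟨q1', htr1, hR'⟩ := (hR q1 q2 hq).2 M0 q2' htr
    exact ⟨q1', ⟨M0, htr1, rfl⟩, hR'⟩
end

section
/- The port-automaton encoding of interaction models distributes over architecture composition: if A1 = (C1, P1, γ1) and A2 = (C2, P2, γ2) are BIP architectures with P_{C1} ∩ P_{C2} = ∅ and ∅ ∈ γ1 ∩ γ2, and γ12 = {M ⊆ P1 ∪ P2 | M ∩ P1 ∈ γ1 and M ∩ P2 ∈ γ2} is the interaction model of A1 ⊕ A2, then the single-state port automaton A_{γ12} over P1 ∪ P2 is bisimilar to the product A_{γ1} ⋈ A_{γ2}. -/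
/-- the port-automaton encoding of interaction models distributes
    over architecture composition: `A_{γ12} ∼ A_{γ1} ⋈ A_{γ2}`. -/
theorem Agamma_compose {N : Type} (P1 P2 : Set N) (γ1 γ2 : Set (Set N))
    (hs1 : ∀ M ∈ γ1, M ⊆ P1) (hs2 : ∀ M ∈ γ2, M ⊆ P2)
    (he1 : ∅ ∈ γ1) (he2 : ∅ ∈ γ2) :
    Bisim
      (fa (Agamma (P1 ∪ P2) {M | M ⊆ P1 ∪ P2 ∧ M ∩ P1 ∈ γ1 ∧ M ∩ P2 ∈ γ2}))
      (fa (paProd (Agamma P1 γ1) (Agamma P2 γ2))) := by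
  refine ⟨fun _ _ => True, trivial, fun q1 q2 _ => ⟨?_, ?_⟩⟩
  · rintro M q1' ⟨hMsub, h1, h2⟩
    refine ⟨q2, Or.inl ⟨M ∩ P1, M ∩ P2, h1, h2, ?_, ?_⟩, trivial⟩
    · ext x; simp [Set.mem_inter_iff]; tauto
    · ext x; constructor
      · intro hx; rcases hMsub hx with h | h
        · exact Or.inl ⟨hx, h⟩
        · exact Or.inr ⟨hx, h⟩
      · rintro (⟨h, _⟩ | ⟨h, _⟩) <;> exact h
  · rintro M q2' (⟨M1, M2, h1, h2, hsync, rfl⟩ | ⟨h1, _, hd⟩ | ⟨h2, _, hd⟩)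
    · have hM1 := hs1 _ h1
      have hM2 := hs2 _ h2
      refine ⟨q1, ⟨Set.union_subset (hM1.trans Set.subset_union_left)
        (hM2.trans Set.subset_union_right), ?_, ?_⟩, trivial⟩
      · have : (M1 ∪ M2) ∩ P1 = M1 := by
          ext x; constructor
          · rintro ⟨hx | hx, hP⟩
            · exact hx
            · have : x ∈ M2 ∩ (Agamma P1 γ1).nodes := ⟨hx, hP⟩
              rw [← hsync] at this; exact this.1
          · intro hx; exact ⟨Or.inl hx, hM1 hx⟩
        rwa [this]
      · have : (M1 ∪ M2) ∩ P2 = M2 := by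
          ext x; constructor
          · rintro ⟨hx | hx, hP⟩
            · have : x ∈ M1 ∩ (Agamma P2 γ2).nodes := ⟨hx, hP⟩
              rw [hsync] at this; exact this.1
            · exact hx
          · intro hx; exact ⟨Or.inr hx, hM2 hx⟩
        rwa [this]
    · have hM1 := hs1 _ h1
      refine ⟨q1, ⟨hM1.trans Set.subset_union_left, ?_, ?_⟩, trivial⟩
      · rwa [Set.inter_eq_self_of_subset_left hM1]
      · rw [show M ∩ P2 = ∅ from hd]; exact he2
    · have hM2 := hs2 _ h2
      refine ⟨q1, ⟨hM2.trans Set.subset_union_right, ?_, ?_⟩, trivial⟩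
      · rw [show M ∩ P1 = ∅ from hd]; exact he1
      · rwa [Set.inter_eq_self_of_subset_left hM2]
end

section
/- The translation from BIP architectures to port automata is a homomorphism up to semantic equivalence: for BIP architectures A1 = (C1, P1, γ1) and A2 = (C2, P2, γ2) in Arch' with P_{C1} ∩ P2 = P_{C2} ∩ P1 = ∅ (hence in particular P_{C1} ∩ P_{C2} = ∅) and ∅ ∈ γ1 ∩ γ2, the port automaton Reo_a(A1 ⊕ A2) is bisimilar to Reo_a(A1) ⋈ Reo_a(A2). -/
lemma archPC_comp {N : Type} (A1 A2 : Arch N)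
    (h1 : Disjoint A1.PC A2.ports) (h2 : Disjoint A2.PC A1.ports) :
    (archComp A1 A2 h1 h2).PC = A1.PC ∪ A2.PC := by
  ext x
  constructor
  · intro hx
    rcases Set.mem_iUnion.mp hx with ⟨k, hk⟩
    rcases k with i | i
    · exact Or.inl (Set.mem_iUnion.mpr ⟨i, hk⟩)
    · exact Or.inr (Set.mem_iUnion.mpr ⟨i, hk⟩)
  · rintro (hx | hx)
    · rcases Set.mem_iUnion.mp hx with ⟨i, hi⟩
      exact Set.mem_iUnion.mpr ⟨Sum.inl i, hi⟩
    · rcases Set.mem_iUnion.mp hx with ⟨i, hi⟩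
      exact Set.mem_iUnion.mpr ⟨Sum.inr i, hi⟩

lemma reoA_selfloop {N : Type} (A : Arch N) (r : (ReoA A).Q) :
    (ReoA A).tr r ∅ r :=
  ⟨∅, ⟨Set.empty_subset _, fun o => Or.inr ⟨Set.empty_inter _, rfl⟩⟩,
    (Set.empty_diff _).symm⟩

/-- `Reo_a` is a homomorphism up to semantic equivalence:
    `Reo_a(A1 ⊕ A2) ∼ Reo_a(A1) ⋈ Reo_a(A2)`. -/
theorem ReoA_homomorphism {N : Type} (A1 A2 : Arch N)
    (hA1 : ArchPrime A1) (hA2 : ArchPrime A2)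
    (h1 : Disjoint A1.PC A2.ports) (h2 : Disjoint A2.PC A1.ports)
    (he1 : ∅ ∈ A1.γ) (he2 : ∅ ∈ A2.γ) :
    Bisim (fa (ReoA (archComp A1 A2 h1 h2)))
      (fa (paProd (ReoA A1) (ReoA A2))) := by
  classical
  have hd1 : ∀ x, x ∈ A1.PC → x ∉ A2.ports := fun x hx => Set.disjoint_left.mp h1 hx
  have hd2 : ∀ x, x ∈ A2.PC → x ∉ A1.ports := fun x hx => Set.disjoint_left.mp h2 hx
  have hsub1 : A1.PC ⊆ A1.ports := Set.iUnion_subset A1.sub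
  have hsub2 : A2.PC ⊆ A2.ports := Set.iUnion_subset A2.sub
  have hPC := archPC_comp A1 A2 h1 h2
  refine ⟨fun q p => (∀ i, q (some (Sum.inl i)) = p.1 (some i)) ∧
                     (∀ i, q (some (Sum.inr i)) = p.2 (some i)),
          ⟨fun i => rfl, fun i => rfl⟩, ?_⟩
  rintro q ⟨p1, p2⟩ ⟨hR1, hR2⟩
  have hR1 : ∀ i, q (some (Sum.inl i)) = p1 (some i) := hR1
  have hR2 : ∀ i, q (some (Sum.inr i)) = p2 (some i) := hR2
  constructor
  · -- forward simulation
    rintro M q' ⟨M0, ⟨hM0sub, hcomp⟩, rfl⟩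
    have hM0P : M0 ⊆ A1.ports ∪ A2.ports := by
      intro x hx
      rcases Set.mem_iUnion.mp (hM0sub hx) with ⟨o, ho⟩
      rcases o with _ | (i | i)
      · exact ho
      · exact Or.inl (A1.sub i ho)
      · exact Or.inr (A2.sub i ho)
    have hcnone : M0 ∩ (A1.ports ∪ A2.ports) ∈ (archComp A1 A2 h1 h2).γ ∨
        (M0 ∩ (A1.ports ∪ A2.ports) = ∅ ∧ q' none = q none) := hcomp none
    have hcinl : ∀ i : A1.ι, (A1.comp i).tr (q (some (Sum.inl i)))
          (M0 ∩ (A1.comp i).nodes) (q' (some (Sum.inl i))) ∨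
        (M0 ∩ (A1.comp i).nodes = ∅ ∧
          q' (some (Sum.inl i)) = q (some (Sum.inl i))) :=
      fun i => hcomp (some (Sum.inl i))
    have hcinr : ∀ i : A2.ι, (A2.comp i).tr (q (some (Sum.inr i)))
          (M0 ∩ (A2.comp i).nodes) (q' (some (Sum.inr i))) ∨
        (M0 ∩ (A2.comp i).nodes = ∅ ∧
          q' (some (Sum.inr i)) = q (some (Sum.inr i))) :=
      fun i => hcomp (some (Sum.inr i))
    have hγ : M0 ∈ (archComp A1 A2 h1 h2).γ := by
      rcases hcnone with h | h
      · rwa [Set.inter_eq_self_of_subset_left hM0P] at h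
      · have hM0e : M0 = ∅ := by
          rw [← Set.inter_eq_self_of_subset_left hM0P]; exact h.1
        rw [hM0e]
        exact ⟨Set.empty_subset _, by simpa using he1, by simpa using he2⟩
    obtain ⟨-, hγ1, hγ2⟩ := hγ
    refine ⟨((fun o => match o with
              | none => ()
              | some i => q' (some (Sum.inl i))),
             (fun o => match o with
              | none => ()
              | some i => q' (some (Sum.inr i)))), ?_, fun i => rfl, fun i => rfl⟩
    refine Or.inl ⟨(M0 ∩ A1.ports) \ A1.PC, (M0 ∩ A2.ports) \ A2.PC, ?_, ?_, ?_, ?_⟩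
    · -- transition of ReoA A1
      refine ⟨M0 ∩ A1.ports, ⟨fun x hx => Set.mem_iUnion.mpr ⟨none, hx.2⟩, ?_⟩, rfl⟩
      intro o
      rcases o with _ | i
      · refine Or.inl ?_
        show M0 ∩ A1.ports ∩ A1.ports ∈ A1.γ
        rw [Set.inter_assoc, Set.inter_self]; exact hγ1
      · show (A1.comp i).tr (p1 (some i)) (M0 ∩ A1.ports ∩ (A1.comp i).nodes)
            (q' (some (Sum.inl i))) ∨
          (M0 ∩ A1.ports ∩ (A1.comp i).nodes = ∅ ∧
            q' (some (Sum.inl i)) = p1 (some i))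
        have hn : M0 ∩ A1.ports ∩ (A1.comp i).nodes = M0 ∩ (A1.comp i).nodes := by
          rw [Set.inter_assoc, Set.inter_eq_self_of_subset_right (A1.sub i)]
        rw [hn, ← hR1 i]
        exact hcinl i
    · -- transition of ReoA A2
      refine ⟨M0 ∩ A2.ports, ⟨fun x hx => Set.mem_iUnion.mpr ⟨none, hx.2⟩, ?_⟩, rfl⟩
      intro o
      rcases o with _ | i
      · refine Or.inl ?_
        show M0 ∩ A2.ports ∩ A2.ports ∈ A2.γ
        rw [Set.inter_assoc, Set.inter_self]; exact hγ2
      · show (A2.comp i).tr (p2 (some i)) (M0 ∩ A2.ports ∩ (A2.comp i).nodes)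
            (q' (some (Sum.inr i))) ∨
          (M0 ∩ A2.ports ∩ (A2.comp i).nodes = ∅ ∧
            q' (some (Sum.inr i)) = p2 (some i))
        have hn : M0 ∩ A2.ports ∩ (A2.comp i).nodes = M0 ∩ (A2.comp i).nodes := by
          rw [Set.inter_assoc, Set.inter_eq_self_of_subset_right (A2.sub i)]
        rw [hn, ← hR2 i]
        exact hcinr i
    · -- synchronization condition
      ext x
      constructor
      · rintro ⟨⟨⟨hxM0, hxP1⟩, hxC1⟩, hx2⟩
        have hxP2 : x ∈ A2.ports := by
          rcases Set.mem_iUnion.mp hx2.1 with ⟨o, ho⟩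
          rcases o with _ | i
          · exact ho
          · exact A2.sub i ho
        exact ⟨⟨⟨hxM0, hxP2⟩, hx2.2⟩, Set.mem_iUnion.mpr ⟨none, hxP1⟩, hxC1⟩
      · rintro ⟨⟨⟨hxM0, hxP2⟩, hxC2⟩, hx1⟩
        have hxP1 : x ∈ A1.ports := by
          rcases Set.mem_iUnion.mp hx1.1 with ⟨o, ho⟩
          rcases o with _ | i
          · exact ho
          · exact A1.sub i ho
        exact ⟨⟨⟨hxM0, hxP1⟩, hx1.2⟩, Set.mem_iUnion.mpr ⟨none, hxP2⟩, hxC2⟩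
    · -- label equality
      rw [hPC]
      ext x
      constructor
      · rintro ⟨hxM0, hxC⟩
        rcases hM0P hxM0 with hxP1 | hxP2
        · exact Or.inl ⟨⟨hxM0, hxP1⟩, fun h => hxC (Or.inl h)⟩
        · exact Or.inr ⟨⟨hxM0, hxP2⟩, fun h => hxC (Or.inr h)⟩
      · rintro (⟨⟨hxM0, hxP1⟩, hxC1⟩ | ⟨⟨hxM0, hxP2⟩, hxC2⟩)
        · exact ⟨hxM0, fun h => h.elim hxC1 (fun h2 => hd2 x h2 hxP1)⟩
        · exact ⟨hxM0, fun h => h.elim (fun h1 => hd1 x h1 hxP2) hxC2⟩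
  · -- backward simulation
    rintro M ⟨p1', p2'⟩ htr
    have hsync : ∃ L1 L2, (ReoA A1).tr p1 L1 p1' ∧ (ReoA A2).tr p2 L2 p2' ∧
        L1 ∩ (ReoA A2).nodes = L2 ∩ (ReoA A1).nodes ∧ M = L1 ∪ L2 := by
      rcases htr with ⟨L1, L2, t1, t2, hs, rfl⟩ | ⟨t1, hq2, hMn2⟩ | ⟨t2, hq1, hMn1⟩
      · exact ⟨L1, L2, t1, t2, hs, rfl⟩
      · refine ⟨M, ∅, t1, ?_, by rw [hMn2, Set.empty_inter], (Set.union_empty M).symm⟩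
        rw [show p2' = p2 from hq2]; exact reoA_selfloop A2 p2
      · refine ⟨∅, M, ?_, t2, by rw [hMn1, Set.empty_inter], (Set.empty_union M).symm⟩
        rw [show p1' = p1 from hq1]; exact reoA_selfloop A1 p1
    obtain ⟨L1, L2, ⟨M1, ⟨hM1sub, hc1⟩, rfl⟩, ⟨M2, ⟨hM2sub, hc2⟩, rfl⟩, hs, rfl⟩ := hsync
    have hM1P : M1 ⊆ A1.ports := by
      intro x hx
      rcases Set.mem_iUnion.mp (hM1sub hx) with ⟨o, ho⟩
      rcases o with _ | i
      · exact ho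
      · exact A1.sub i ho
    have hM2P : M2 ⊆ A2.ports := by
      intro x hx
      rcases Set.mem_iUnion.mp (hM2sub hx) with ⟨o, ho⟩
      rcases o with _ | i
      · exact ho
      · exact A2.sub i ho
    have hc1n : M1 ∩ A1.ports ∈ A1.γ ∨
        (M1 ∩ A1.ports = ∅ ∧ p1' none = p1 none) := hc1 none
    have hc2n : M2 ∩ A2.ports ∈ A2.γ ∨
        (M2 ∩ A2.ports = ∅ ∧ p2' none = p2 none) := hc2 none
    have hc1i : ∀ i : A1.ι, (A1.comp i).tr (p1 (some i))
          (M1 ∩ (A1.comp i).nodes) (p1' (some i)) ∨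
        (M1 ∩ (A1.comp i).nodes = ∅ ∧ p1' (some i) = p1 (some i)) :=
      fun i => hc1 (some i)
    have hc2i : ∀ i : A2.ι, (A2.comp i).tr (p2 (some i))
          (M2 ∩ (A2.comp i).nodes) (p2' (some i)) ∨
        (M2 ∩ (A2.comp i).nodes = ∅ ∧ p2' (some i) = p2 (some i)) :=
      fun i => hc2 (some i)
    have key21 : ∀ x, x ∈ M2 → x ∈ A1.ports → x ∈ M1 := by
      intro x hx2 hxP1
      have hxC2 : x ∉ A2.PC := fun h => hd2 x h hxP1
      have hxC1 : x ∉ A1.PC := fun h => hd1 x h (hM2P hx2)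
      exact ((Set.ext_iff.mp hs x).mpr
        ⟨⟨hx2, hxC2⟩, Set.mem_iUnion.mpr ⟨none, hxP1⟩, hxC1⟩).1.1
    have key12 : ∀ x, x ∈ M1 → x ∈ A2.ports → x ∈ M2 := by
      intro x hx1 hxP2
      have hxC1 : x ∉ A1.PC := fun h => hd1 x h hxP2
      have hxC2 : x ∉ A2.PC := fun h => hd2 x h (hM1P hx1)
      exact ((Set.ext_iff.mp hs x).mp
        ⟨⟨hx1, hxC1⟩, Set.mem_iUnion.mpr ⟨none, hxP2⟩, hxC2⟩).1.1
    have hM0P1 : (M1 ∪ M2) ∩ A1.ports = M1 := by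
      ext x
      constructor
      · rintro ⟨hx | hx, hxP⟩
        · exact hx
        · exact key21 x hx hxP
      · exact fun hx => ⟨Or.inl hx, hM1P hx⟩
    have hM0P2 : (M1 ∪ M2) ∩ A2.ports = M2 := by
      ext x
      constructor
      · rintro ⟨hx | hx, hxP⟩
        · exact key12 x hx hxP
        · exact hx
      · exact fun hx => ⟨Or.inr hx, hM2P hx⟩
    have hγ1 : M1 ∈ A1.γ := by
      rcases hc1n with h | h
      · rwa [Set.inter_eq_self_of_subset_left hM1P] at h
      · rw [Set.inter_eq_self_of_subset_left hM1P] at h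
        rw [h.1]; exact he1
    have hγ2 : M2 ∈ A2.γ := by
      rcases hc2n with h | h
      · rwa [Set.inter_eq_self_of_subset_left hM2P] at h
      · rw [Set.inter_eq_self_of_subset_left hM2P] at h
        rw [h.1]; exact he2
    have hM0P : M1 ∪ M2 ⊆ A1.ports ∪ A2.ports :=
      Set.union_subset (hM1P.trans Set.subset_union_left)
        (hM2P.trans Set.subset_union_right)
    refine ⟨fun o => match o with
             | none => ()
             | some (Sum.inl i) => p1' (some i)
             | some (Sum.inr i) => p2' (some i),
            ⟨M1 ∪ M2, ⟨?_, ?_⟩, ?_⟩, fun i => rfl, fun i => rfl⟩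
    · -- contained in the union of all nodes
      intro x hx
      exact Set.mem_iUnion.mpr ⟨none, hM0P hx⟩
    · -- componentwise condition
      intro o
      rcases o with _ | (i | i)
      · refine Or.inl ?_
        show (M1 ∪ M2) ∩ (A1.ports ∪ A2.ports) ∈ (archComp A1 A2 h1 h2).γ
        rw [Set.inter_eq_self_of_subset_left hM0P]
        exact ⟨hM0P, by rw [hM0P1]; exact hγ1, by rw [hM0P2]; exact hγ2⟩
      · show (A1.comp i).tr (q (some (Sum.inl i)))
            ((M1 ∪ M2) ∩ (A1.comp i).nodes) (p1' (some i)) ∨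
          ((M1 ∪ M2) ∩ (A1.comp i).nodes = ∅ ∧
            p1' (some i) = q (some (Sum.inl i)))
        have hn : (M1 ∪ M2) ∩ (A1.comp i).nodes = M1 ∩ (A1.comp i).nodes := by
          ext x
          constructor
          · rintro ⟨hx | hx, hxn⟩
            · exact ⟨hx, hxn⟩
            · exact absurd (hM2P hx) (hd1 x (Set.mem_iUnion.mpr ⟨i, hxn⟩))
          · exact fun hx => ⟨Or.inl hx.1, hx.2⟩
        rw [hn, hR1 i]
        exact hc1i i
      · show (A2.comp i).tr (q (some (Sum.inr i)))
            ((M1 ∪ M2) ∩ (A2.comp i).nodes) (p2' (some i)) ∨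
          ((M1 ∪ M2) ∩ (A2.comp i).nodes = ∅ ∧
            p2' (some i) = q (some (Sum.inr i)))
        have hn : (M1 ∪ M2) ∩ (A2.comp i).nodes = M2 ∩ (A2.comp i).nodes := by
          ext x
          constructor
          · rintro ⟨hx | hx, hxn⟩
            · exact absurd (hM1P hx) (hd2 x (Set.mem_iUnion.mpr ⟨i, hxn⟩))
            · exact ⟨hx, hxn⟩
          · exact fun hx => ⟨Or.inr hx.1, hx.2⟩
        rw [hn, hR2 i]
        exact hc2i i
    · -- label equality
      rw [hPC]
      ext x
      constructor
      · rintro (⟨hx, hxC1⟩ | ⟨hx, hxC2⟩)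
        · exact ⟨Or.inl hx, fun h => h.elim hxC1 (fun h2 => hd2 x h2 (hM1P hx))⟩
        · exact ⟨Or.inr hx, fun h => h.elim (fun h1 => hd1 x h1 (hM2P hx)) hxC2⟩
      · rintro ⟨hx | hx, hxC⟩
        · exact Or.inl ⟨hx, fun h => hxC (Or.inl h)⟩
        · exact Or.inr ⟨hx, fun h => hxC (Or.inr h)⟩
end

section
/- The data-sensitive interpretations commute with the translation from stateless constraint automata to BIP interaction models: for every stateless constraint automaton with polarity A ∈ CA±, g_b(BIP_b(A)) = f_b(A), i.e., the LTS interpretation of the extracted interaction model equals the LTS interpretation of the automaton. The key lemma is that for every transition label (N, g) of A, the set of data assignments Δ(α(N,g)) defined by the generated interaction expression equals the set Δ(N, g) of data assignments δ : 2P → D+1 with δ(2P \ N) = {0} and δ ⊨ g. -/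
/-- Data assignments on the duplicated port set `2P = {p*, p_*}`:
    `(p, true)` is the source node `p*`, `(p, false)` the sink node `p_*`;
    `none` models the absence of data (the element `0 ∈ 1`). -/
abbrev DAssign (P D : Type) := (P × Bool) → Option D

/-- The upward part `δ_up` of a data assignment: `δ_up(p) = δ(p*)`. -/
def dup {P D : Type} (δ : DAssign P D) : P → Option D := fun p => δ (p, true)

/-- The downward part `δ_dn` of a data assignment: `δ_dn(p) = δ(p_*)`. -/
def ddn {P D : Type} (δ : DAssign P D) : P → Option D := fun p => δ (p, false)

/-- A stateless constraint automaton with polarity over bidirectional ports `P`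
    and data domain `D` (mixed nodes already hidden): a set of transitions
    `(N, g)` with `N ⊆ 2P` a synchronization constraint and `g` a data
    constraint, represented semantically as a predicate on data assignments. -/
structure SCA (P D : Type) where
  tr : Set ((Set (P × Bool)) × (DAssign P D → Prop))

/-- `Δ(N, g)`: the data assignments vanishing outside `N` that satisfy `g`. -/
def Dca {P D : Type} (N : Set (P × Bool)) (g : DAssign P D → Prop) :
    Set (DAssign P D) :=
  {δ | (∀ x, x ∉ N → δ x = none) ∧ g δ}

/-- The interpretation `f_b` of a stateless constraint automaton with polarity:
    the single-state LTS whose self-loops are labeled by the satisfying data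
    assignments of its transitions. -/
def fb {P D : Type} (A : SCA P D) : LTS (DAssign P D) :=
  ⟨Unit, (), fun _ δ _ => ∃ t ∈ A.tr, δ ∈ Dca t.1 t.2⟩

/-- A simple BIP connector `α = ({w} ← A).[g : (x_w, X_L) := up(X_A) // X_A := dn(x_w, X_L)]`:
    bottom ports `bot`, local-variable valuations `L`, a guard on the upward
    values, upward transfers `upw` (to the top port) and `upl` (to the locals),
    and a (possibly nondeterministic) downward transfer relation `dn`. -/
structure SConn (P D : Type) where
  bot : Set P
  L : Type
  guard : (P → Option D) → Prop
  upw : (P → Option D) → D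
  upl : (P → Option D) → L
  dn : D → L → (P → Option D) → Prop

/-- `Δ(α)`: the data assignments vanishing outside `2P_α` whose upward part
    satisfies the guard and whose downward part is a downward transfer of the
    upward transfers of the upward part. -/
def Dim {P D : Type} (α : SConn P D) : Set (DAssign P D) :=
  {δ | (∀ x : P × Bool, x.1 ∉ α.bot → δ x = none) ∧ α.guard (dup δ) ∧
    α.dn (α.upw (dup δ)) (α.upl (dup δ)) (ddn δ)}

/-- The interpretation `g_b` of a BIP interaction model: the single-state LTS
    whose self-loops are labeled by the data assignments allowed by its
    interaction expressions. -/
def gb {P D : Type} (Γ : Set (SConn P D)) : LTS (DAssign P D) :=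
  ⟨Unit, (), fun _ δ _ => ∃ α ∈ Γ, δ ∈ Dim α⟩

/-- Recombine an upward and a downward part into a data assignment. -/
def mk2 {P D : Type} (u d : P → Option D) : DAssign P D :=
  fun x => if x.2 then u x.1 else d x.1

/-- The simple BIP connector `α(N, g)` generated from a transition `(N, g)`:
    bottom ports `P_N`, guard `g_src ≡ ∃ sinks. g`, locals storing the upward
    values, and the relational (`solve`-style) downward transfer picking any
    sink values satisfying `g`. -/
def connOf {P D : Type} [Inhabited D] (N : Set (P × Bool))
    (g : DAssign P D → Prop) : SConn P D where
  bot := {p | (p, true) ∈ N ∨ (p, false) ∈ N}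
  L := P → Option D
  guard := fun u => ∃ d, (∀ x, x ∉ N → mk2 u d x = none) ∧ g (mk2 u d)
  upw := fun _ => default
  upl := fun u => u
  dn := fun _ u d => (∀ x, x ∉ N → mk2 u d x = none) ∧ g (mk2 u d)

/-- The translation `BIP_b`: one simple BIP connector per transition. -/
def BIPb {P D : Type} [Inhabited D] (A : SCA P D) : Set (SConn P D) :=
  {c | ∃ t ∈ A.tr, c = connOf t.1 t.2}

/-- The synchronization constraint `N(α)` of the transition generated from `α`. -/
def Nof {P D : Type} (α : SConn P D) : Set (P × Bool) := {x | x.1 ∈ α.bot}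

/-- The data constraint `g(α)` of the transition generated from `α`:
    the guard holds of the upward values and the downward values are a downward
    transfer of the upward transfers. -/
def gof {P D : Type} (α : SConn P D) : DAssign P D → Prop :=
  fun δ => α.guard (dup δ) ∧ α.dn (α.upw (dup δ)) (α.upl (dup δ)) (ddn δ)

/-- The translation `Reo_b`: the single-state constraint automaton with one
    transition `(N(α), g(α))` per simple BIP connector `α ∈ Γ`. -/
def Reob {P D : Type} (Γ : Set (SConn P D)) : SCA P D :=
  ⟨{t | ∃ α ∈ Γ, t = (Nof α, gof α)}⟩

lemma mk2_dup_ddn {P D : Type} (δ : DAssign P D) : mk2 (dup δ) (ddn δ) = δ := by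
  funext x
  cases x with
  | mk p b => cases b <;> rfl

lemma Dim_connOf {P D : Type} [Inhabited D] (N : Set (P × Bool))
    (g : DAssign P D → Prop) : Dim (connOf N g) = Dca N g := by
  ext δ
  constructor
  · rintro ⟨-, -, hdn⟩
    simp only [connOf, mk2_dup_ddn] at hdn
    exact hdn
  · rintro ⟨hvan, hg⟩
    refine ⟨?_, ⟨ddn δ, ?_, ?_⟩, ?_⟩
    · rintro ⟨p, b⟩ hp
      apply hvan
      intro hmem
      cases b
      · exact hp (Or.inr hmem)
      · exact hp (Or.inl hmem)
    · rw [mk2_dup_ddn]; exact hvan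
    · rw [mk2_dup_ddn]; exact hg
    · show (∀ x, x ∉ N → mk2 (dup δ) (ddn δ) x = none) ∧ g (mk2 (dup δ) (ddn δ))
      rw [mk2_dup_ddn]; exact ⟨hvan, hg⟩

/-- the data-sensitive interpretations commute with the
    translation from stateless constraint automata to BIP interaction models:
    `Δ(α(N,g)) = Δ(N,g)` for every transition label, and
    `g_b(BIP_b(A)) = f_b(A)`. -/
theorem gb_BIPb_eq_fb {P D : Type} [Inhabited D] (A : SCA P D) :
    (∀ t ∈ A.tr, Dim (connOf t.1 t.2) = Dca t.1 t.2) ∧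
      gb (BIPb A) = fb A := by
  refine ⟨fun t _ => Dim_connOf t.1 t.2, ?_⟩
  unfold gb fb
  congr 1
  funext _ δ _
  apply propext
  constructor
  · rintro ⟨α, ⟨t, ht, rfl⟩, hδ⟩
    exact ⟨t, ht, (Dim_connOf t.1 t.2) ▸ hδ⟩
  · rintro ⟨t, ht, hδ⟩
    exact ⟨connOf t.1 t.2, ⟨t, ht, rfl⟩, (Dim_connOf t.1 t.2).symm ▸ hδ⟩
end

section
/- Hiding all ports of the empty interaction trivializes idle transitions: for any BIP architecture A ∈ Arch' whose interaction model contains ∅, the interpretation g_a(A) has an ∅-labeled self-loop at every reachable state, and every ∅-labeled transition in g_a(A) is a self-loop. -/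
/-- Reachability in an LTS. -/
def LTSReach {Λ : Type} (L : LTS Λ) (q : L.Q) : Prop :=
  Relation.ReflTransGen (fun a b => ∃ l, L.tr a l b) L.init q

/-- for `A ∈ Arch'` with `∅ ∈ γ`, the interpretation `g_a(A)` has
    an `∅`-labeled self-loop at every reachable state, and every `∅`-labeled
    transition whose underlying interaction is `∅` is a self-loop. -/
theorem empty_interaction_trivializes {N : Type} (A : Arch N)
    (hA : ArchPrime A) (he : (∅ : Set N) ∈ A.γ) :
    (∀ q, LTSReach (ga A) q → (ga A).tr q ∅ q) ∧
      (∀ v v', appTr A v (∅ : Set N) v' → v' = v) := by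
  constructor
  · intro q _
    refine ⟨∅, Or.inr ⟨Set.empty_subset _, he, fun i => ⟨fun h => absurd (Set.empty_inter _) h, fun _ => rfl⟩⟩, by simp⟩
  · rintro v v' (⟨_, i, htr, hj⟩ | ⟨_, _, h⟩)
    · funext j
      by_cases hji : j = i
      · subst hji; exact hA j _ _ htr
      · exact hj j hji
    · funext j
      exact (h j).2 (Set.empty_inter _)
end
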